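/- Let k ≥ 4 be even, n ∈ kℕ, and V = A ∪ B with |A| = |B| = n/2. Then the minimum codegree of B̄_{n,k}(A,B) (edges = k-sets even with respect to A) equals n/2 − k + 1, and the minimum codegree of B_{n,k}(A,B) (edges = k-sets odd with respect to A) equals n/2 − k + 2, provided n is sufficiently large relative to k. -/

import Mathlib

open Finset

private lemma parity_filter_even (n : ℕ) (A S : Finset (Fin n)) :
    Finset.univ.filter (fun v => v ∉ S ∧ Even (((insert v S) ∩ A).card)) =
      if Even ((S ∩ A).card) then (Finset.univ \ A) \ S else A \ S := by
  ext v
  by_cases hvA : v ∈ A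
  · by_cases hvS : v ∈ S
    · by_cases he : Even ((S ∩ A).card) <;> simp [hvA, hvS, he]
    · have h1 : (insert v S) ∩ A = insert v (S ∩ A) := Finset.insert_inter_of_mem hvA
      have h2 : v ∉ S ∩ A := fun h => hvS (Finset.mem_inter.1 h).1
      by_cases he : Even ((S ∩ A).card) <;>
        simp [hvA, hvS, he, h1, Finset.card_insert_of_notMem h2, Nat.even_add_one]
  · have h1 : (insert v S) ∩ A = S ∩ A := Finset.insert_inter_of_notMem hvA
    by_cases hvS : v ∈ S <;> by_cases he : Even ((S ∩ A).card) <;>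
      simp [hvA, hvS, he, h1]

private lemma parity_filter_odd (n : ℕ) (A S : Finset (Fin n)) :
    Finset.univ.filter (fun v => v ∉ S ∧ Odd (((insert v S) ∩ A).card)) =
      if Even ((S ∩ A).card) then A \ S else (Finset.univ \ A) \ S := by
  ext v
  by_cases hvA : v ∈ A
  · by_cases hvS : v ∈ S
    · by_cases he : Even ((S ∩ A).card) <;> simp [hvA, hvS, he]
    · have h1 : (insert v S) ∩ A = insert v (S ∩ A) := Finset.insert_inter_of_mem hvA
      have h2 : v ∉ S ∩ A := fun h => hvS (Finset.mem_inter.1 h).1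
      by_cases he : Even ((S ∩ A).card) <;>
        simp [hvA, hvS, he, h1, Finset.card_insert_of_notMem h2,
          Nat.odd_add_one, Nat.not_even_iff_odd, Nat.not_odd_iff_even]
  · have h1 : (insert v S) ∩ A = S ∩ A := Finset.insert_inter_of_notMem hvA
    by_cases hvS : v ∈ S <;> by_cases he : Even ((S ∩ A).card) <;>
      simp [hvA, hvS, he, h1, Nat.not_even_iff_odd] <;>
      exact Nat.not_even_iff_odd.mp he

/-- Minimum codegrees of the parity k-graphs: for |A| = |B| = n/2, n ∈ kℕ and n large,
δ_{k-1}(B̄) = n/2 − k + 1 and δ_{k-1}(B) = n/2 − k + 2. -/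
theorem codegree_parity_graphs (k : ℕ) (hk : Even k) (hk4 : 4 ≤ k) :
    ∃ n₀ : ℕ, ∀ n ≥ n₀, k ∣ n → ∀ A : Finset (Fin n),
      A.card = n / 2 → (Finset.univ \ A).card = n / 2 →
      ((∀ S : Finset (Fin n), S.card = k - 1 →
          n / 2 - k + 1 ≤
            (Finset.univ.filter (fun v => v ∉ S ∧ Even (((insert v S) ∩ A).card))).card) ∧
       (∃ S : Finset (Fin n), S.card = k - 1 ∧
          (Finset.univ.filter (fun v => v ∉ S ∧ Even (((insert v S) ∩ A).card))).card
            = n / 2 - k + 1) ∧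
       (∀ S : Finset (Fin n), S.card = k - 1 →
          n / 2 - k + 2 ≤
            (Finset.univ.filter (fun v => v ∉ S ∧ Odd (((insert v S) ∩ A).card))).card) ∧
       (∃ S : Finset (Fin n), S.card = k - 1 ∧
          (Finset.univ.filter (fun v => v ∉ S ∧ Odd (((insert v S) ∩ A).card))).card
            = n / 2 - k + 2)) := by
  refine ⟨2 * k, fun n hn hdvd A hA hB => ?_⟩
  have hnk : k ≤ n / 2 := by omega
  -- card computations
  have cardA : ∀ S : Finset (Fin n), (A \ S).card = n / 2 - (S ∩ A).card := by
    intro S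
    have := Finset.card_inter_add_card_sdiff A S
    rw [Finset.inter_comm] at this
    omega
  have cardB : ∀ S : Finset (Fin n),
      ((Finset.univ \ A) \ S).card = n / 2 - (S.card - (S ∩ A).card) := by
    intro S
    have h1 := Finset.card_inter_add_card_sdiff (Finset.univ \ A) S
    have h2 : (Finset.univ \ A) ∩ S = S \ A := by
      ext v; simp [Finset.mem_sdiff, Finset.mem_inter, and_comm]
    have h3 := Finset.card_inter_add_card_sdiff S A
    rw [h2] at h1
    omega
  have hsle : ∀ S : Finset (Fin n), (S ∩ A).card ≤ S.card :=
    fun S => Finset.card_le_card Finset.inter_subset_left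
  obtain ⟨k2, hk2⟩ := hk
  refine ⟨?_, ?_, ?_, ?_⟩
  · intro S hS
    rw [parity_filter_even]
    by_cases he : Even ((S ∩ A).card) <;>
      simp only [he, if_true, if_false, cardA, cardB, hS] <;>
      [skip; skip] <;>
      · have := hsle S
        rw [hS] at this
        omega
  · obtain ⟨S, hSsub, hScard⟩ :=
      Finset.exists_subset_card_eq (s := Finset.univ \ A) (n := k - 1) (by omega)
    have hSA : S ∩ A = ∅ := by
      rw [Finset.eq_empty_iff_forall_notMem]
      intro v hv
      have := hSsub (Finset.mem_inter.1 hv).1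
      simp [Finset.mem_sdiff] at this
      exact this (Finset.mem_inter.1 hv).2
    refine ⟨S, hScard, ?_⟩
    rw [parity_filter_even, hSA]
    simp only [Finset.card_empty, Even.zero, if_true]
    rw [cardB, hSA, hScard]
    simp
    omega
  · intro S hS
    rw [parity_filter_odd]
    have := hsle S
    rw [hS] at this
    have he2 : ((S ∩ A).card) % 2 = 0 ∨ ((S ∩ A).card) % 2 = 1 := by omega
    by_cases he : Even ((S ∩ A).card) <;>
      simp only [he, if_true, if_false, cardA, cardB, hS]
    · have : (S ∩ A).card % 2 = 0 := Nat.even_iff.mp he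
      omega
    · have : (S ∩ A).card % 2 = 1 := Nat.odd_iff.mp (Nat.not_even_iff_odd.mp he)
      omega
  · -- S with exactly one vertex in A
    obtain ⟨a, haA⟩ : A.Nonempty := Finset.card_pos.mp (by omega)
    obtain ⟨T, hTsub, hTcard⟩ :=
      Finset.exists_subset_card_eq (s := Finset.univ \ A) (n := k - 2) (by omega)
    have haT : a ∉ T := by
      intro h
      have := hTsub h
      simp [Finset.mem_sdiff] at this
      exact this haA
    refine ⟨insert a T, by rw [Finset.card_insert_of_notMem haT, hTcard]; omega, ?_⟩
    have hSA : (insert a T) ∩ A = {a} := by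
      ext v
      simp only [Finset.mem_inter, Finset.mem_insert, Finset.mem_singleton]
      constructor
      · rintro ⟨hv1 | hv1, hv2⟩
        · exact hv1
        · have := hTsub hv1; simp [Finset.mem_sdiff] at this; exact absurd hv2 this
      · rintro rfl; exact ⟨Or.inl rfl, haA⟩
    rw [parity_filter_odd, hSA]
    simp only [Finset.card_singleton, Nat.not_even_one, if_false]
    rw [cardB, hSA, Finset.card_insert_of_notMem haT, hTcard]
    simp
    omega
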